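/- Let (X, μ) be a measure space, let d ≥ 1 be a natural number, let ℝ^d denote EuclideanSpace ℝ (Fin d) with Lebesgue measure, and let k, m be real numbers with 0 ≤ k < m. There exists a constant C > 0, depending only on d, m and k, such that for every measurable g : X × ℝ^d → ℝ and every G > 0 with 0 ≤ g(x, v) ≤ G for almost every (x, v), defining the local moments l_j(x) := ∫_{ℝ^d} ‖v‖^j g(x, v) dv, one has ‖l_k‖_{L^{(m+d)/(k+d)}(X, μ)} ≤ C · G^{(m−k)/(m+d)} · ‖l_m‖_{L^1(X, μ)}^{(k+d)/(m+d)}. -/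

import Mathlib

open MeasureTheory ENNReal Metric NNReal


theorem real_calc (k m dd G Vr Mr : ℝ) (hk : 0 ≤ k) (hkm : k < m) (hdd : 0 < dd)
    (hG : 0 < G) (hV : 0 < Vr) (hM : 0 < Mr) :
    G * ((Mr / (G * Vr)) ^ (1 / (m + dd))) ^ (k + dd) * Vr
      + ((Mr / (G * Vr)) ^ (1 / (m + dd))) ^ (k - m) * Mr
    = 2 * Vr ^ ((m - k) / (m + dd)) * G ^ ((m - k) / (m + dd)) * Mr ^ ((k + dd) / (m + dd)) := by
  have hmd : 0 < m + dd := by linarith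
  have hGV : (0:ℝ) < G * Vr := mul_pos hG hV
  set Q : ℝ := Mr / (G * Vr) with hQdef
  have hQ : 0 < Q := div_pos hM hGV
  have h1 : (Q ^ (1 / (m + dd))) ^ (k + dd) = Q ^ ((k + dd) / (m + dd)) := by
    rw [← Real.rpow_mul hQ.le, one_div, inv_mul_eq_div]
  have h2 : (Q ^ (1 / (m + dd))) ^ (k - m) = Q ^ ((k - m) / (m + dd)) := by
    rw [← Real.rpow_mul hQ.le, one_div, inv_mul_eq_div]
  rw [h1, h2]
  have h3 : Q ^ ((k - m) / (m + dd)) = Q ^ ((k + dd) / (m + dd)) * Q⁻¹ := by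
    rw [← Real.rpow_neg_one Q, ← Real.rpow_add hQ]
    congr 1
    field_simp
    ring
  have h4 : Q ^ ((k + dd) / (m + dd)) * Q⁻¹ * Mr = Q ^ ((k + dd) / (m + dd)) * (G * Vr) := by
    rw [hQdef]
    field_simp
  have h5 : Q ^ ((k + dd) / (m + dd)) = Mr ^ ((k + dd) / (m + dd)) * (G * Vr) ^ (-((k + dd) / (m + dd))) := by
    rw [hQdef, Real.div_rpow hM.le hGV.le, Real.rpow_neg hGV.le, div_eq_mul_inv]
  have h6 : (G * Vr) * (G * Vr) ^ (-((k + dd) / (m + dd))) = (G * Vr) ^ ((m - k) / (m + dd)) := by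
    nth_rewrite 1 [← Real.rpow_one (G * Vr)]
    rw [← Real.rpow_add hGV]
    congr 1
    field_simp
    ring
  calc G * Q ^ ((k + dd) / (m + dd)) * Vr + Q ^ ((k - m) / (m + dd)) * Mr
      = (G * Vr) * Q ^ ((k + dd) / (m + dd)) + Q ^ ((k + dd) / (m + dd)) * Q⁻¹ * Mr := by
        rw [h3]; ring
    _ = 2 * ((G * Vr) * Q ^ ((k + dd) / (m + dd))) := by rw [h4]; ring
    _ = 2 * ((G * Vr) * (G * Vr) ^ (-((k + dd) / (m + dd))) * Mr ^ ((k + dd) / (m + dd))) := by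
        rw [h5]; ring
    _ = 2 * Vr ^ ((m - k) / (m + dd)) * G ^ ((m - k) / (m + dd)) * Mr ^ ((k + dd) / (m + dd)) := by
        rw [h6, Real.mul_rpow hG.le hV.le]; ring

theorem pointwise_interp {d : ℕ} (hd : 1 ≤ d) (k m G : ℝ) (hk : 0 ≤ k) (hkm : k < m)
    (hG : 0 < G) (f : EuclideanSpace ℝ (Fin d) → ℝ) (hf : Measurable f)
    (hfG : ∀ᵐ v : EuclideanSpace ℝ (Fin d), ENNReal.ofReal (f v) ≤ ENNReal.ofReal G) :
    (∫⁻ v : EuclideanSpace ℝ (Fin d), (‖v‖₊ : ℝ≥0∞) ^ k * ENNReal.ofReal (f v))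
      ≤ ENNReal.ofReal
          (2 * (volume (ball (0 : EuclideanSpace ℝ (Fin d)) 1)).toReal ^ ((m - k) / (m + d))
            * G ^ ((m - k) / (m + d)))
        * (∫⁻ v : EuclideanSpace ℝ (Fin d), (‖v‖₊ : ℝ≥0∞) ^ m * ENNReal.ofReal (f v))
            ^ ((k + d) / (m + d)) := by
  have hd0 : (0:ℝ) < d := by exact_mod_cast hd
  have hmd : (0:ℝ) < m + d := by linarith
  have hkd : (0:ℝ) < k + d := by linarith
  set ν : Measure (EuclideanSpace ℝ (Fin d)) := volume with hν
  set V : ℝ≥0∞ := ν (ball (0 : EuclideanSpace ℝ (Fin d)) 1) with hVdef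
  have hV0 : 0 < V := measure_ball_pos ν _ one_pos
  have hVt : V ≠ ⊤ := (measure_ball_lt_top).ne
  have hVr : 0 < V.toReal := ENNReal.toReal_pos hV0.ne' hVt
  set M : ℝ≥0∞ := ∫⁻ v, (‖v‖₊ : ℝ≥0∞) ^ m * ENNReal.ofReal (f v) ∂ν with hMdef
  have hmeas : ∀ j : ℝ, Measurable fun v : EuclideanSpace ℝ (Fin d) =>
      (‖v‖₊ : ℝ≥0∞) ^ j * ENNReal.ofReal (f v) := fun j =>
    (measurable_nnnorm.coe_nnreal_ennreal.pow_const j).mul (ENNReal.measurable_ofReal.comp hf)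
  have hCpos : (0:ℝ) < 2 * V.toReal ^ ((m - k) / (m + d)) * G ^ ((m - k) / (m + d)) := by
    positivity
  rcases eq_or_ne M 0 with hM0 | hM0
  · -- moment M = 0 : LHS = 0
    have h0 : ∀ᵐ v ∂ν, (‖v‖₊ : ℝ≥0∞) ^ m * ENNReal.ofReal (f v) = 0 :=
      (lintegral_eq_zero_iff (hmeas m)).1 hM0
    haveI : Nontrivial (EuclideanSpace ℝ (Fin d)) :=
      nontrivial_of_ne (EuclideanSpace.single ⟨0, hd⟩ (1:ℝ)) 0 (by
        intro h
        have := congrArg (fun x => x ⟨0, hd⟩) h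
        simp [EuclideanSpace.single_apply] at this)
    haveI : NullSingletonClass ν := by infer_instance
    have hne : ∀ᵐ v ∂ν, v ≠ (0 : EuclideanSpace ℝ (Fin d)) := by
      rw [ae_iff]
      simpa using measure_singleton (0 : EuclideanSpace ℝ (Fin d))
    have hzero : (∫⁻ v, (‖v‖₊ : ℝ≥0∞) ^ k * ENNReal.ofReal (f v) ∂ν) = 0 := by
      rw [lintegral_eq_zero_iff (hmeas k)]
      filter_upwards [h0, hne] with v hv hvne
      rcases mul_eq_zero.1 hv with h | h
      · exfalso
        rw [ENNReal.rpow_eq_zero_iff] at h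
        rcases h with ⟨h, _⟩ | ⟨h, _⟩
        · exact hvne (by simpa using h)
        · simp at h
      · simp [h]
    rw [hzero]
    exact zero_le
  rcases eq_or_ne M ⊤ with hMt | hMt
  · -- M = ⊤ : RHS = ⊤
    rw [hMt, ENNReal.top_rpow_of_pos (by positivity), ENNReal.mul_top
      (by simpa using (ENNReal.ofReal_pos.2 hCpos).ne')]
    exact le_top
  -- main case : 0 < M < ⊤
  have hMr : 0 < M.toReal := ENNReal.toReal_pos hM0 hMt
  set Q : ℝ := M.toReal / (G * V.toReal) with hQdef
  have hQ : 0 < Q := div_pos hMr (by positivity)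
  set R : ℝ := Q ^ (1 / (m + d)) with hRdef
  have hR : 0 < R := Real.rpow_pos_of_pos hQ _
  have hsplit : (∫⁻ v, (‖v‖₊ : ℝ≥0∞) ^ k * ENNReal.ofReal (f v) ∂ν)
      = (∫⁻ v in ball (0 : EuclideanSpace ℝ (Fin d)) R, (‖v‖₊ : ℝ≥0∞) ^ k * ENNReal.ofReal (f v) ∂ν)
        + ∫⁻ v in (ball (0 : EuclideanSpace ℝ (Fin d)) R)ᶜ, (‖v‖₊ : ℝ≥0∞) ^ k * ENNReal.ofReal (f v) ∂ν :=
    (lintegral_add_compl _ measurableSet_ball).symm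
  have hball : (∫⁻ v in ball (0 : EuclideanSpace ℝ (Fin d)) R,
      (‖v‖₊ : ℝ≥0∞) ^ k * ENNReal.ofReal (f v) ∂ν)
      ≤ ENNReal.ofReal (G * R ^ (k + (d:ℝ)) * V.toReal) := by
    calc (∫⁻ v in ball (0 : EuclideanSpace ℝ (Fin d)) R,
        (‖v‖₊ : ℝ≥0∞) ^ k * ENNReal.ofReal (f v) ∂ν)
        ≤ ∫⁻ _ in ball (0 : EuclideanSpace ℝ (Fin d)) R,
            ENNReal.ofReal (R ^ k) * ENNReal.ofReal G ∂ν := by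
          refine lintegral_mono_ae ?_
          filter_upwards [ae_restrict_mem measurableSet_ball, ae_restrict_of_ae hfG]
            with v hv hvG
          refine mul_le_mul' ?_ hvG
          rw [← ENNReal.ofReal_rpow_of_pos hR]
          refine ENNReal.rpow_le_rpow ?_ hk
          rw [mem_ball, dist_zero_right] at hv
          rw [← ENNReal.ofReal_coe_nnreal, coe_nnnorm]
          exact ENNReal.ofReal_le_ofReal hv.le
      _ = ENNReal.ofReal (R ^ k) * ENNReal.ofReal G * ν (ball 0 R) := by
          rw [setLIntegral_const]
      _ = ENNReal.ofReal (G * R ^ (k + (d:ℝ)) * V.toReal) := by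
          have hvol : ν (ball (0 : EuclideanSpace ℝ (Fin d)) R)
              = ENNReal.ofReal (R ^ ((d:ℝ))) * ENNReal.ofReal V.toReal := by
            rw [hν, MeasureTheory.Measure.addHaar_ball_of_pos _ _ hR, ← hν, ← hVdef,
              ENNReal.ofReal_toReal hVt]
            congr 2
            rw [finrank_euclideanSpace, Fintype.card_fin, Real.rpow_natCast]
          rw [hvol, ← ENNReal.ofReal_mul (by positivity), ← ENNReal.ofReal_mul (by positivity),
            ← ENNReal.ofReal_mul (by positivity)]
          congr 1
          rw [Real.rpow_add hR]
          ring
  have hcompl : (∫⁻ v in (ball (0 : EuclideanSpace ℝ (Fin d)) R)ᶜ,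
      (‖v‖₊ : ℝ≥0∞) ^ k * ENNReal.ofReal (f v) ∂ν)
      ≤ ENNReal.ofReal (R ^ (k - m)) * M := by
    calc (∫⁻ v in (ball (0 : EuclideanSpace ℝ (Fin d)) R)ᶜ,
        (‖v‖₊ : ℝ≥0∞) ^ k * ENNReal.ofReal (f v) ∂ν)
        ≤ ∫⁻ v in (ball (0 : EuclideanSpace ℝ (Fin d)) R)ᶜ,
            ENNReal.ofReal (R ^ (k - m)) * ((‖v‖₊ : ℝ≥0∞) ^ m * ENNReal.ofReal (f v)) ∂ν := by
          refine lintegral_mono_ae ?_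
          filter_upwards [ae_restrict_mem measurableSet_ball.compl] with v hv
          rw [Set.mem_compl_iff, mem_ball, dist_zero_right, not_lt] at hv
          have hvR : ENNReal.ofReal R ≤ (‖v‖₊ : ℝ≥0∞) := by
            rw [← ENNReal.ofReal_coe_nnreal, coe_nnnorm]
            exact ENNReal.ofReal_le_ofReal hv
          have hv0 : (‖v‖₊ : ℝ≥0∞) ≠ 0 := by
            intro h
            rw [h] at hvR
            exact absurd (le_antisymm hvR zero_le) (ENNReal.ofReal_pos.2 hR).ne'
          have hvt : (‖v‖₊ : ℝ≥0∞) ≠ ⊤ := ENNReal.coe_ne_top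
          have hsplitpow : (‖v‖₊ : ℝ≥0∞) ^ k = (‖v‖₊ : ℝ≥0∞) ^ m * (‖v‖₊ : ℝ≥0∞) ^ (k - m) := by
            rw [← ENNReal.rpow_add m (k - m) hv0 hvt]
            norm_num
          have hRnn : (0:ℝ≥0) < R.toNNReal := Real.toNNReal_pos.2 hR
          have hle : R.toNNReal ≤ ‖v‖₊ := by
            have h1 : R.toNNReal ≤ (‖v‖).toNNReal :=
              (Real.toNNReal_le_toNNReal_iff (norm_nonneg v)).2 hv
            rwa [← coe_nnnorm v, Real.toNNReal_coe] at h1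
          have hkey : (‖v‖₊ : ℝ≥0∞) ^ (k - m) ≤ ENNReal.ofReal (R ^ (k - m)) := by
            have e1 : (‖v‖₊ : ℝ≥0∞) ^ (k - m) = ((‖v‖₊ ^ (k - m) : ℝ≥0) : ℝ≥0∞) :=
              (ENNReal.coe_rpow_of_ne_zero (by exact_mod_cast hv0) _).symm
            have e2 : ENNReal.ofReal (R ^ (k - m))
                = ((R.toNNReal ^ (k - m) : ℝ≥0) : ℝ≥0∞) := by
              rw [ENNReal.ofReal, Real.toNNReal_rpow_of_nonneg hR.le]
            rw [e1, e2]
            exact_mod_cast NNReal.rpow_le_rpow_of_nonpos hRnn hle (by linarith)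
          have hpow : (‖v‖₊ : ℝ≥0∞) ^ k ≤ ENNReal.ofReal (R ^ (k - m)) * (‖v‖₊ : ℝ≥0∞) ^ m := by
            rw [hsplitpow, mul_comm (ENNReal.ofReal (R ^ (k - m)))]
            exact mul_le_mul' le_rfl hkey
          calc (‖v‖₊ : ℝ≥0∞) ^ k * ENNReal.ofReal (f v)
              ≤ (ENNReal.ofReal (R ^ (k - m)) * (‖v‖₊ : ℝ≥0∞) ^ m) * ENNReal.ofReal (f v) :=
                mul_le_mul' hpow le_rfl
            _ = ENNReal.ofReal (R ^ (k - m)) * ((‖v‖₊ : ℝ≥0∞) ^ m * ENNReal.ofReal (f v)) := by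
                rw [mul_assoc]
      _ ≤ ∫⁻ v, ENNReal.ofReal (R ^ (k - m)) * ((‖v‖₊ : ℝ≥0∞) ^ m * ENNReal.ofReal (f v)) ∂ν :=
          setLIntegral_le_lintegral _ _
      _ = ENNReal.ofReal (R ^ (k - m)) * M := by
          rw [lintegral_const_mul' _ _ ENNReal.ofReal_ne_top, hMdef]
  calc (∫⁻ v, (‖v‖₊ : ℝ≥0∞) ^ k * ENNReal.ofReal (f v) ∂ν)
      ≤ ENNReal.ofReal (G * R ^ (k + (d:ℝ)) * V.toReal) + ENNReal.ofReal (R ^ (k - m)) * M := by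
        rw [hsplit]; exact add_le_add hball hcompl
    _ = ENNReal.ofReal (G * R ^ (k + (d:ℝ)) * V.toReal + R ^ (k - m) * M.toReal) := by
        have hMe : ENNReal.ofReal (R ^ (k - m)) * M = ENNReal.ofReal (R ^ (k - m) * M.toReal) := by
          rw [ENNReal.ofReal_mul (by positivity), ENNReal.ofReal_toReal hMt]
        rw [hMe, ENNReal.ofReal_add (by positivity) (by positivity)]
    _ = ENNReal.ofReal
          (2 * V.toReal ^ ((m - k) / (m + d)) * G ^ ((m - k) / (m + d))
            * M.toReal ^ ((k + (d:ℝ)) / (m + d))) := by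
        congr 1
        have := real_calc k m d G V.toReal M.toReal hk hkm hd0 hG hVr hMr
        rw [← hQdef, ← hRdef] at this
        rw [this]
    _ = ENNReal.ofReal
          (2 * V.toReal ^ ((m - k) / (m + d)) * G ^ ((m - k) / (m + d)))
        * M ^ ((k + (d:ℝ)) / (m + d)) := by
        rw [ENNReal.ofReal_mul (by positivity)]
        congr 1
        rw [← ENNReal.ofReal_rpow_of_pos hMr, ENNReal.ofReal_toReal hMt]

/-- Interpolation of local velocity moments (Lemma 5.1):
`‖l_k‖_{L^{(m+d)/(k+d)}(X,μ)} ≤ C · G^{(m−k)/(m+d)} · ‖l_m‖_{L^1(X,μ)}^{(k+d)/(m+d)}`,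
where `l_j x = ∫ ‖v‖^j g (x, v) dv`. -/
theorem local_moment_interpolation {X : Type*} [MeasurableSpace X] (μ : Measure X)
    (d : ℕ) (hd : 1 ≤ d) (k m : ℝ) (hk : 0 ≤ k) (hkm : k < m) :
    ∃ C : ℝ, 0 < C ∧
      ∀ g : X × EuclideanSpace ℝ (Fin d) → ℝ, Measurable g →
      ∀ G : ℝ, 0 < G →
      (∀ᵐ p ∂(μ.prod (volume : Measure (EuclideanSpace ℝ (Fin d)))), 0 ≤ g p ∧ g p ≤ G) →
      (∫⁻ x, (∫⁻ v : EuclideanSpace ℝ (Fin d),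
            (‖v‖₊ : ℝ≥0∞) ^ k * ENNReal.ofReal (g (x, v))) ^ ((m + d) / (k + d)) ∂μ) ^
          ((k + d) / (m + d)) ≤
        ENNReal.ofReal (C * G ^ ((m - k) / (m + d))) *
          (∫⁻ x, (∫⁻ v : EuclideanSpace ℝ (Fin d),
              (‖v‖₊ : ℝ≥0∞) ^ m * ENNReal.ofReal (g (x, v))) ∂μ) ^ ((k + d) / (m + d)) := by
  have hd0 : (0:ℝ) < d := by exact_mod_cast hd
  have hmd : (0:ℝ) < m + d := by linarith
  have hkd : (0:ℝ) < k + d := by linarith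
  set Vr : ℝ := (volume (Metric.ball (0 : EuclideanSpace ℝ (Fin d)) 1)).toReal with hVr
  have hV0 : 0 < Vr := ENNReal.toReal_pos (measure_ball_pos _ _ one_pos).ne'
    (measure_ball_lt_top).ne
  refine ⟨2 * Vr ^ ((m - k) / (m + d)), by positivity, ?_⟩
  intro g hg G hG hae
  set e : ℝ := (k + d) / (m + d) with he
  set p : ℝ := (m + d) / (k + d) with hp
  have he0 : (0:ℝ) < e := by positivity
  have hp0 : (0:ℝ) < p := by positivity
  have hep : e * p = 1 := by rw [he, hp]; field_simp
  have hpe : p * e = 1 := by rw [mul_comm]; exact hep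
  set A : ℝ≥0∞ := ENNReal.ofReal
    (2 * Vr ^ ((m - k) / (m + d)) * G ^ ((m - k) / (m + d))) with hA
  have hAt : A ≠ ⊤ := ENNReal.ofReal_ne_top
  set lk : X → ℝ≥0∞ := fun x => ∫⁻ v : EuclideanSpace ℝ (Fin d),
    (‖v‖₊ : ℝ≥0∞) ^ k * ENNReal.ofReal (g (x, v)) with hlk
  set lm : X → ℝ≥0∞ := fun x => ∫⁻ v : EuclideanSpace ℝ (Fin d),
    (‖v‖₊ : ℝ≥0∞) ^ m * ENNReal.ofReal (g (x, v)) with hlm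
  have key : ∀ᵐ x ∂μ, lk x ≤ A * (lm x) ^ e := by
    filter_upwards [Measure.ae_ae_of_ae_prod hae] with x hx
    exact pointwise_interp hd k m G hk hkm hG (fun v => g (x, v))
      (hg.comp measurable_prodMk_left)
      (hx.mono fun v hv => ENNReal.ofReal_le_ofReal hv.2)
  have step : ∀ᵐ x ∂μ, (lk x) ^ p ≤ A ^ p * lm x := by
    filter_upwards [key] with x hx
    calc (lk x) ^ p ≤ (A * (lm x) ^ e) ^ p := ENNReal.rpow_le_rpow hx hp0.le
      _ = A ^ p * ((lm x) ^ e) ^ p := ENNReal.mul_rpow_of_nonneg _ _ hp0.le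
      _ = A ^ p * lm x := by
          rw [← ENNReal.rpow_mul, hep, ENNReal.rpow_one]
  have hint : (∫⁻ x, (lk x) ^ p ∂μ) ≤ A ^ p * ∫⁻ x, lm x ∂μ := by
    calc (∫⁻ x, (lk x) ^ p ∂μ) ≤ ∫⁻ x, A ^ p * lm x ∂μ := lintegral_mono_ae step
      _ = A ^ p * ∫⁻ x, lm x ∂μ :=
          lintegral_const_mul' _ _ (ENNReal.rpow_ne_top_of_nonneg hp0.le hAt)
  calc (∫⁻ x, (lk x) ^ p ∂μ) ^ e ≤ (A ^ p * ∫⁻ x, lm x ∂μ) ^ e :=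
        ENNReal.rpow_le_rpow hint he0.le
    _ = (A ^ p) ^ e * (∫⁻ x, lm x ∂μ) ^ e := ENNReal.mul_rpow_of_nonneg _ _ he0.le
    _ = A * (∫⁻ x, lm x ∂μ) ^ e := by
        rw [← ENNReal.rpow_mul, hpe, ENNReal.rpow_one]
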